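/- arXiv:1311.6156 — 2 statements merged into one kernel-verified Lean document; each statement's English description precedes it below -/
import Mathlib

section
/- Let $G$ be a discrete group and $R$ a commutative ring. A short exact sequence of $RG$-modules splits when restricted to every finite subgroup $H \leq G$ if and only if it splits after applying $- \otimes_R R\Delta$, where $\Delta = \coprod_{H \in \mathfrak{F}} G/H$ is the disjoint union of the coset spaces of the finite subgroups of $G$. -/
open CategoryTheory CategoryTheory.Limits CategoryTheory.MonoidalCategory

noncomputable section
namespace FPaper

variable (R : Type) [CommRing R] (G : Type) [Group G]

/-- The disjoint union `Δ = ⨿_{H finite} G/H` of coset spaces of finite subgroups. -/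
def DeltaType : Type := Σ H : {H : Subgroup G // Finite H}, G ⧸ H.1

instance : SMul G (DeltaType G) := ⟨fun g x => ⟨x.1, g • x.2⟩⟩

instance : MulAction G (DeltaType G) where
  one_smul x := by cases x with | mk H q => show (⟨H, (1:G) • q⟩ : DeltaType G) = ⟨H, q⟩; rw [one_smul]
  mul_smul g h x := by
    cases x with | mk H q =>
    show (⟨H, (g*h) • q⟩ : DeltaType G) = ⟨H, g • h • q⟩
    rw [mul_smul]

/-- The permutation module `RΔ`. -/
def RDelta : Rep R G := Rep.ofMulAction R G (DeltaType G)

/-- A module is `𝔉`-projective if it is a direct summand of some `N ⊗ RΔ`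
(diagonal `G`-action). -/
def FProjective (M : Rep R G) : Prop :=
  ∃ (N : Rep R G) (i : M ⟶ N ⊗ RDelta R G) (r : N ⊗ RDelta R G ⟶ M), i ≫ r = 𝟙 M

/-- Restriction to a subgroup. -/
def resF (K : Subgroup G) : Rep.{0} R G ⥤ Rep.{0} R K :=
  Rep.resFunctor K.subtype

/-- A resolution `⋯ → P₁ → P₀ → M → 0`. -/
structure Res (M : Rep R G) where
  P : ℕ → Rep R G
  d : ∀ n, P (n+1) ⟶ P n
  ε : P 0 ⟶ M
  surj : Function.Surjective ε.hom
  exact0 : Function.Exact (d 0).hom ε.hom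
  exact : ∀ n, Function.Exact (d (n+1)).hom (d n).hom

variable {R G}

/-- The (augmented) resolution is split exact over every finite subgroup:
there is an `RK`-linear chain contraction for every finite `K ≤ G`. -/
def Res.FSplit {M : Rep R G} (res : Res R G M) : Prop :=
  ∀ K : Subgroup G, Finite K →
    ∃ (t : (resF R G K).obj M ⟶ (resF R G K).obj (res.P 0))
      (s : ∀ n, (resF R G K).obj (res.P n) ⟶ (resF R G K).obj (res.P (n+1))),
      t ≫ (resF R G K).map res.ε = 𝟙 _ ∧
      (resF R G K).map res.ε ≫ t + s 0 ≫ (resF R G K).map (res.d 0) = 𝟙 _ ∧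
      ∀ n, (resF R G K).map (res.d n) ≫ s n + s (n+1) ≫ (resF R G K).map (res.d (n+1)) = 𝟙 _

/-- All modules in the resolution are `𝔉`-projective. -/
def Res.FProj {M : Rep R G} (res : Res R G M) : Prop := ∀ n, FProjective R G (res.P n)

/-- The resolution has length at most `n`. -/
def Res.LengthLe {M : Rep R G} (res : Res R G M) (n : ℕ) : Prop :=
  ∀ i, n < i → IsZero (res.P i)



section AuxProof
variable {R : Type} [CommRing R] {G : Type} [Group G]

lemma smul_mk_delta (u : G) (H : {H : Subgroup G // Finite H}) (a : G) :
    u • (⟨H, QuotientGroup.mk a⟩ : DeltaType G) = ⟨H, QuotientGroup.mk (u * a)⟩ := by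
  show (⟨H, u • (QuotientGroup.mk a : G ⧸ H.1)⟩ : DeltaType G) = _
  rw [MulAction.Quotient.smul_mk]; rfl

lemma rep_mul (B : Rep R G) (a b : G) (v : B.V) :
    B.ρ (a * b) v = B.ρ a (B.ρ b v) := by rw [map_mul]; rfl

/-- Projection `B ⊗ RΔ →ₗ B`, `b ⊗ f ↦ f x₀ • b`. -/
def projAt (B : Rep R G) (x₀ : DeltaType G) :
    TensorProduct R B.V (MonoidAlgebra R (DeltaType G)) →ₗ[R] B.V :=
  TensorProduct.lift ((LinearMap.lsmul R B.V ∘ₗ Finsupp.lapply x₀ ∘ₗ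
    (MonoidAlgebra.coeffLinearEquiv R).toLinearMap).flip)

@[simp] lemma projAt_tmul (B : Rep R G) (x₀ : DeltaType G) (b : B.V) (f : MonoidAlgebra R (DeltaType G)) :
    projAt B x₀ (b ⊗ₜ f) = f.coeff x₀ • b := rfl

/-- Inclusion `B →ₗ B ⊗ RΔ`, `b ↦ b ⊗ single x₀ 1`. -/
def inclAt (B : Rep R G) (x₀ : DeltaType G) :
    B.V →ₗ[R] TensorProduct R B.V (MonoidAlgebra R (DeltaType G)) :=
  (TensorProduct.mk R B.V (MonoidAlgebra R (DeltaType G))).flip (MonoidAlgebra.single x₀ 1)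

@[simp] lemma inclAt_apply (B : Rep R G) (x₀ : DeltaType G) (b : B.V) :
    inclAt B x₀ b = b ⊗ₜ MonoidAlgebra.single x₀ 1 := rfl

lemma projAt_comm (B : Rep R G) (u : G) (x₀ : DeltaType G) (hx : u • x₀ = x₀)
    (z : TensorProduct R B.V (MonoidAlgebra R (DeltaType G))) :
    projAt B x₀ ((B ⊗ Rep.ofMulAction R G (DeltaType G)).ρ u z) = B.ρ u (projAt B x₀ z) := by
  induction z using TensorProduct.induction_on with
  | zero => simp
  | add a b ha hb => simp only [map_add, ha, hb]
  | tmul b f =>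
    have h1 : (B ⊗ Rep.ofMulAction R G (DeltaType G)).ρ u (b ⊗ₜ f) =
        B.ρ u b ⊗ₜ Representation.ofMulAction R G (DeltaType G) u f := rfl
    have h2 : (Representation.ofMulAction R G (DeltaType G) u f).coeff x₀ = f.coeff (u⁻¹ • x₀) :=
      Representation.coeff_ofMulAction u f x₀
    have h3 : u⁻¹ • x₀ = x₀ := by rw [inv_smul_eq_iff, hx]
    rw [h1, projAt_tmul, projAt_tmul, h2, h3, map_smul]

lemma projAt_natural {B C : Rep R G} (g : B ⟶ C) (x₀ : DeltaType G)
    (z : TensorProduct R B.V (MonoidAlgebra R (DeltaType G))) :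
    g.hom (projAt B x₀ z) = projAt C x₀ ((g ▷ Rep.ofMulAction R G (DeltaType G)).hom z) := by
  induction z using TensorProduct.induction_on with
  | zero => simp
  | add a b ha hb => simp only [map_add, ha, hb]
  | tmul b f =>
    have h1 : (g ▷ Rep.ofMulAction R G (DeltaType G)).hom (b ⊗ₜ f) = (g.hom b ⊗ₜ f :
        TensorProduct R C.V (MonoidAlgebra R (DeltaType G))) := rfl
    rw [h1, projAt_tmul, projAt_tmul, map_smul]

/-- Extensionality for maps out of `M ⊗ RΔ`. -/
lemma tensor_finsupp_ext {M : Rep R G} {N : Type} [AddCommGroup N] [Module R N]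
    (L1 L2 : TensorProduct R M.V (MonoidAlgebra R (DeltaType G)) →ₗ[R] N)
    (h : ∀ (c : M.V) (x : DeltaType G),
      L1 (c ⊗ₜ MonoidAlgebra.single x 1) = L2 (c ⊗ₜ MonoidAlgebra.single x 1)) : L1 = L2 := by
  apply TensorProduct.ext
  apply LinearMap.ext; intro c
  apply MonoidAlgebra.lhom_ext'; intro x; apply LinearMap.ext; intro r
  have hs : (MonoidAlgebra.single x r : MonoidAlgebra R (DeltaType G)) = r • MonoidAlgebra.single x 1 := by
    rw [MonoidAlgebra.smul_single, smul_eq_mul, mul_one]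
  simp only [LinearMap.comp_apply, MonoidAlgebra.lsingle_apply, LinearMap.compr₂ₛₗ_apply,
    LinearMap.compr₂_apply, TensorProduct.mk_apply, hs, TensorProduct.tmul_smul,
    map_smul]
  rw [h]

lemma tensor_rho_tmul_single (B : Rep R G) (u : G) (b : B.V) (x : DeltaType G) (r : R) :
    (B ⊗ Rep.ofMulAction R G (DeltaType G)).ρ u (b ⊗ₜ MonoidAlgebra.single x r) =
      B.ρ u b ⊗ₜ MonoidAlgebra.single (u • x) r := by
  have h1 : (B ⊗ Rep.ofMulAction R G (DeltaType G)).ρ u (b ⊗ₜ MonoidAlgebra.single x r) =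
      B.ρ u b ⊗ₜ Representation.ofMulAction R G (DeltaType G) u (MonoidAlgebra.single x r) := rfl
  rw [h1, Representation.ofMulAction_single]

section Sigma
variable {B C : Rep R G}

/-- The twisted section at a point of `Δ`. -/
def sigmaAt (t : ∀ H : {H : Subgroup G // Finite H}, (C.V →ₗ[R] B.V))
    (hcomm : ∀ (H : {H : Subgroup G // Finite H}) (k : H.1) (c : C.V),
      t H (C.ρ (k : G) c) = B.ρ (k : G) (t H c))
    (x : DeltaType G) : (C.V →ₗ[R] B.V) :=
  Quotient.liftOn' x.2 (fun a => (B.ρ a) ∘ₗ t x.1 ∘ₗ (C.ρ a⁻¹))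
    (by
      intro a b hab
      have hk : a⁻¹ * b ∈ x.1.1 := QuotientGroup.leftRel_apply.mp hab
      apply LinearMap.ext; intro c
      have h1 : C.ρ a⁻¹ c = C.ρ (a⁻¹ * b) (C.ρ b⁻¹ c) := by
        rw [← rep_mul]
        congr 1; group
      simp only [LinearMap.comp_apply]
      erw [h1]
      erw [hcomm x.1 ⟨a⁻¹ * b, hk⟩ ((C.ρ b⁻¹) c)]
      erw [← rep_mul B a (a⁻¹ * b)]
      rw [mul_inv_cancel_left])

lemma sigmaAt_mk (t : ∀ H : {H : Subgroup G // Finite H}, (C.V →ₗ[R] B.V))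
    (hcomm : ∀ (H : {H : Subgroup G // Finite H}) (k : H.1) (c : C.V),
      t H (C.ρ (k : G) c) = B.ρ (k : G) (t H c))
    (H : {H : Subgroup G // Finite H}) (a : G) (c : C.V) :
    sigmaAt t hcomm ⟨H, QuotientGroup.mk a⟩ c = B.ρ a (t H (C.ρ a⁻¹ c)) := rfl

lemma sigmaAt_equivariant (t : ∀ H : {H : Subgroup G // Finite H}, (C.V →ₗ[R] B.V))
    (hcomm : ∀ (H : {H : Subgroup G // Finite H}) (k : H.1) (c : C.V),
      t H (C.ρ (k : G) c) = B.ρ (k : G) (t H c))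
    (u : G) (x : DeltaType G) (c : C.V) :
    sigmaAt t hcomm (u • x) (C.ρ u c) = B.ρ u (sigmaAt t hcomm x c) := by
  obtain ⟨H, q⟩ := x
  induction q using Quotient.inductionOn' with
  | h a =>
    show sigmaAt t hcomm (u • (⟨H, QuotientGroup.mk a⟩ : DeltaType G)) (C.ρ u c) = _
    rw [smul_mk_delta, sigmaAt_mk, sigmaAt_mk]
    have h1 : C.ρ (u * a)⁻¹ (C.ρ u c) = C.ρ a⁻¹ c := by
      rw [← rep_mul]
      congr 1; group
    rw [h1, ← rep_mul]

lemma sigmaAt_section (t : ∀ H : {H : Subgroup G // Finite H}, (C.V →ₗ[R] B.V))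
    (hcomm : ∀ (H : {H : Subgroup G // Finite H}) (k : H.1) (c : C.V),
      t H (C.ρ (k : G) c) = B.ρ (k : G) (t H c))
    (g : B ⟶ C) (hsec : ∀ (H : {H : Subgroup G // Finite H}) (c : C.V), g.hom (t H c) = c)
    (x : DeltaType G) (c : C.V) :
    g.hom (sigmaAt t hcomm x c) = c := by
  obtain ⟨H, q⟩ := x
  induction q using Quotient.inductionOn' with
  | h a =>
    show g.hom (sigmaAt t hcomm (⟨H, QuotientGroup.mk a⟩ : DeltaType G) c) = c
    rw [sigmaAt_mk]
    have hg : ∀ (u : G) (b : B.V), g.hom (B.ρ u b) = C.ρ u (g.hom b) := by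
      intro u b
      exact Rep.hom_comm_apply g u b
    rw [hg, hsec, ← rep_mul, mul_inv_cancel, map_one]
    rfl

/-- The induced map `C ⊗ RΔ →ₗ B ⊗ RΔ`. -/
def bigS (σ : DeltaType G → (C.V →ₗ[R] B.V)) :
    TensorProduct R C.V (MonoidAlgebra R (DeltaType G)) →ₗ[R] TensorProduct R B.V (MonoidAlgebra R (DeltaType G)) :=
  TensorProduct.lift (((Finsupp.lsum R fun x =>
    LinearMap.toSpanSingleton R _ ((inclAt B x) ∘ₗ σ x)) ∘ₗ
    (MonoidAlgebra.coeffLinearEquiv R).toLinearMap).flip)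

lemma bigS_tmul_single (σ : DeltaType G → (C.V →ₗ[R] B.V)) (c : C.V) (x : DeltaType G) :
    bigS σ (c ⊗ₜ MonoidAlgebra.single x 1) = σ x c ⊗ₜ MonoidAlgebra.single x 1 := by
  show ((Finsupp.lsum R fun x =>
    LinearMap.toSpanSingleton R _ ((inclAt B x) ∘ₗ σ x)) (Finsupp.single x 1)) c
    = σ x c ⊗ₜ MonoidAlgebra.single x 1
  rw [Finsupp.lsum_single]
  show (1 : R) • ((inclAt B x ∘ₗ σ x) c) = _
  rw [one_smul]
  rfl

end Sigma
end AuxProof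

/-- A short exact sequence of `RG`-modules splits over every
finite subgroup of `G` iff it splits after applying `- ⊗_R RΔ`. -/
theorem FSplit_iff_split_after_tensor_RDelta
    (R : Type) [CommRing R] (G : Type) [Group G]
    (A B C : Rep R G) (f : A ⟶ B) (g : B ⟶ C)
    (hf : Function.Injective f.hom) (hg : Function.Surjective g.hom)
    (hfg : Function.Exact f.hom g.hom) :
    (∀ K : Subgroup G, Finite K →
      ∃ s : (resF R G K).obj C ⟶ (resF R G K).obj B,
        s ≫ (resF R G K).map g = 𝟙 ((resF R G K).obj C)) ↔
    (∃ s : C ⊗ RDelta R G ⟶ B ⊗ RDelta R G,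
        s ≫ MonoidalCategory.whiskerRight g (RDelta R G) = 𝟙 (C ⊗ RDelta R G)) := by
  unfold RDelta
  constructor
  · intro h
    classical
    let t : ∀ H : {H : Subgroup G // Finite H}, (C.V →ₗ[R] B.V) :=
      fun H => (h H.1 H.2).choose.hom.toLinearMap
    have hcomm : ∀ (H : {H : Subgroup G // Finite H}) (k : H.1) (c : C.V),
        t H (C.ρ (k : G) c) = B.ρ (k : G) (t H c) := by
      intro H k c
      exact Rep.hom_comm_apply (h H.1 H.2).choose k c
    have hsec : ∀ (H : {H : Subgroup G // Finite H}) (c : C.V), g.hom (t H c) = c := by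
      intro H c
      exact congrArg (fun φ : (resF R G H.1).obj C ⟶ (resF R G H.1).obj C => Rep.Hom.hom φ c)
        (h H.1 H.2).choose_spec
    refine ⟨Rep.ofHom (ρ := (C ⊗ Rep.ofMulAction R G (DeltaType G)).ρ) (σ := (B ⊗ Rep.ofMulAction R G (DeltaType G)).ρ)
        ⟨bigS (sigmaAt t hcomm), ?_⟩, ?_⟩
    · intro u
      apply tensor_finsupp_ext (M := C)
      intro c x
      show bigS (sigmaAt t hcomm) ((C ⊗ Rep.ofMulAction R G (DeltaType G)).ρ u (c ⊗ₜ MonoidAlgebra.single x 1))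
        = (B ⊗ Rep.ofMulAction R G (DeltaType G)).ρ u (bigS (sigmaAt t hcomm) (c ⊗ₜ MonoidAlgebra.single x 1))
      rw [tensor_rho_tmul_single, bigS_tmul_single, bigS_tmul_single, tensor_rho_tmul_single,
        sigmaAt_equivariant]
    · apply Rep.hom_ext
      apply Representation.IntertwiningMap.ext
      apply tensor_finsupp_ext (M := C)
      intro c x
      show (g ▷ Rep.ofMulAction R G (DeltaType G)).hom (bigS (sigmaAt t hcomm) (c ⊗ₜ MonoidAlgebra.single x 1))
        = c ⊗ₜ MonoidAlgebra.single x 1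
      rw [bigS_tmul_single]
      have h1 : (g ▷ Rep.ofMulAction R G (DeltaType G)).hom ((sigmaAt t hcomm x c) ⊗ₜ MonoidAlgebra.single x 1)
          = g.hom (sigmaAt t hcomm x c) ⊗ₜ MonoidAlgebra.single x 1 := rfl
      rw [h1, sigmaAt_section t hcomm g hsec x c]
  · rintro ⟨s, hs⟩ K hK
    let x₀ : DeltaType G := ⟨⟨K, hK⟩, QuotientGroup.mk (1 : G)⟩
    have hfix : ∀ k : K, (k : G) • x₀ = x₀ := by
      intro k
      show ((⟨⟨K, hK⟩, (k : G) • QuotientGroup.mk (1 : G)⟩ : DeltaType G)) = x₀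
      have : ((k : G) • QuotientGroup.mk (1 : G) : G ⧸ K) = QuotientGroup.mk (1 : G) := by
        rw [MulAction.Quotient.smul_mk]
        apply QuotientGroup.eq.mpr
        simpa using k.2
      rw [this]
    have hshom : ∀ (u : G) (z : TensorProduct R C.V (MonoidAlgebra R (DeltaType G))),
        s.hom ((C ⊗ Rep.ofMulAction R G (DeltaType G)).ρ u z) = (B ⊗ Rep.ofMulAction R G (DeltaType G)).ρ u (s.hom z) := by
      intro u z
      exact Rep.hom_comm_apply s u z
    have hsid : ∀ (z : TensorProduct R C.V (MonoidAlgebra R (DeltaType G))),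
        (g ▷ Rep.ofMulAction R G (DeltaType G)).hom (s.hom z) = z := by
      intro z
      exact congrArg (fun φ => Rep.Hom.hom φ z) hs
    refine ⟨Rep.ofHom (ρ := ((resF R G K).obj C).ρ) (σ := ((resF R G K).obj B).ρ)
        ⟨projAt B x₀ ∘ₗ s.hom.toLinearMap ∘ₗ inclAt C x₀, ?_⟩, ?_⟩
    · intro k0
      let k : K := k0
      show _ ∘ₗ (C.ρ (k : G)) = (B.ρ (k : G)) ∘ₗ _
      apply LinearMap.ext; intro c
      show projAt B x₀ (s.hom (inclAt C x₀ (C.ρ (k : G) c)))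
        = B.ρ (k : G) (projAt B x₀ (s.hom (inclAt C x₀ c)))
      have h1 : inclAt C x₀ (C.ρ (k : G) c)
          = (C ⊗ Rep.ofMulAction R G (DeltaType G)).ρ (k : G) (inclAt C x₀ c) := by
        rw [inclAt_apply, inclAt_apply, tensor_rho_tmul_single, hfix k]
      rw [h1, hshom, projAt_comm B (k : G) x₀ (hfix k)]
    · apply Rep.hom_ext
      apply Representation.IntertwiningMap.ext
      apply LinearMap.ext; intro (c : C.V)
      show g.hom (projAt B x₀ (s.hom (inclAt C x₀ c))) = c
      rw [projAt_natural g x₀, hsid, inclAt_apply, projAt_tmul, MonoidAlgebra.coeff_single, Finsupp.single_eq_same,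
        one_smul]

end FPaper
end
end

section
/- If an $RG$-module $N$ has finite $\mathfrak{F}$-projective dimension and $M$ is $\mathfrak{F}_G$-projective, then $\mathfrak{F}\mathrm{Ext}^i_{RG}(M, N) = 0$ for all $i \geq 1$. -/
open CategoryTheory CategoryTheory.Limits CategoryTheory.MonoidalCategory

noncomputable section
namespace FPaper

variable (R : Type) [CommRing R] (G : Type) [Group G]

variable {R G}

/-- `M` is `𝔉_G`-projective: it is a cokernel in an `𝔉`-strong `𝔉`-complete
resolution, i.e. an acyclic `𝔉`-split `ℤ`-indexed complex of `𝔉`-projectives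
which stays exact under `Hom(-, Q)` for every `𝔉`-projective `Q`. -/
def FGProjective (R : Type) [CommRing R] (G : Type) [Group G] (M : Rep R G) : Prop :=
  ∃ (T : ℤ → Rep R G) (d : ∀ n : ℤ, T (n+1) ⟶ T n) (π : T 0 ⟶ M),
    (∀ n, FProjective R G (T n)) ∧
    (∀ n : ℤ, Function.Exact (d (n+1)).hom (d n).hom) ∧
    (∀ K : Subgroup G, Finite K →
      ∃ s : ∀ n : ℤ, (resF R G K).obj (T n) ⟶ (resF R G K).obj (T (n+1)),
        ∀ n : ℤ, (resF R G K).map (d n) ≫ s n + s (n+1) ≫ (resF R G K).map (d (n+1)) = 𝟙 _) ∧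
    Function.Surjective π.hom ∧ Function.Exact (d 0).hom π.hom ∧
    (∀ Q : Rep R G, FProjective R G Q → ∀ (n : ℤ) (φ : T (n+1) ⟶ Q),
      d (n+1) ≫ φ = 0 → ∃ ψ : T n ⟶ Q, φ = d n ≫ ψ)

variable (R : Type) [CommRing R] (G : Type) [Group G]

/-- A right resolution `0 → M → T⁰ → T¹ → ⋯`. -/
structure CoRes (M : Rep R G) where
  T : ℕ → Rep R G
  ι : M ⟶ T 0
  d : ∀ n, T n ⟶ T (n+1)
  inj : Function.Injective ι.hom
  exact0 : Function.Exact ι.hom (d 0).hom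
  exact : ∀ n, Function.Exact (d n).hom (d (n+1)).hom

variable {R G}

/-- All terms of the right resolution are `𝔉`-projective. -/
def CoRes.FProj {M : Rep R G} (c : CoRes R G M) : Prop := ∀ n, FProjective R G (c.T n)

/-- The right resolution is `𝔉`-split: it admits an `RK`-linear chain
contraction for every finite subgroup `K ≤ G`. -/
def CoRes.FSplit {M : Rep R G} (c : CoRes R G M) : Prop :=
  ∀ K : Subgroup G, Finite K →
    ∃ (h0 : (resF R G K).obj (c.T 0) ⟶ (resF R G K).obj M)
      (h : ∀ n, (resF R G K).obj (c.T (n+1)) ⟶ (resF R G K).obj (c.T n)),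
      (resF R G K).map c.ι ≫ h0 = 𝟙 _ ∧
      h0 ≫ (resF R G K).map c.ι + (resF R G K).map (c.d 0) ≫ h 0 = 𝟙 _ ∧
      ∀ n, h n ≫ (resF R G K).map (c.d n)
        + (resF R G K).map (c.d (n+1)) ≫ h (n+1) = 𝟙 _

/-- The right resolution is `𝔉`-strong: it stays exact under `Hom_{RG}(-, Q)`
for every `𝔉`-projective `Q`. -/
def CoRes.FStrong {M : Rep R G} (c : CoRes R G M) : Prop :=
  ∀ Q : Rep R G, FProjective R G Q →
    (∀ φ : M ⟶ Q, ∃ ψ : c.T 0 ⟶ Q, c.ι ≫ ψ = φ) ∧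
    (∀ φ : c.T 0 ⟶ Q, c.ι ≫ φ = 0 → ∃ ψ : c.T 1 ⟶ Q, φ = c.d 0 ≫ ψ) ∧
    (∀ (n : ℕ) (φ : c.T (n+1) ⟶ Q), c.d n ≫ φ = 0 →
      ∃ ψ : c.T (n+2) ⟶ Q, φ = c.d (n+1) ≫ ψ)

lemma rho_rho (X : Rep R G) (a b : G) (x : X.V) : X.ρ a (X.ρ b x) = X.ρ (a*b) x := by
  rw [map_mul]; rfl

lemma rho_one (X : Rep R G) (x : X.V) : X.ρ (1 : G) x = x := by
  rw [map_one]; rfl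

lemma hom_comm {X Y : Rep R G} (f : X ⟶ Y) (g : G) (x : X.V) :
    f.hom (X.ρ g x) = Y.ρ g (f.hom x) := Rep.hom_comm_apply f g x

/-- The core lifting construction. -/
theorem liftCore {A B C : Rep R G} (W : Rep R G) (f : A ⟶ B) (g : B ⟶ C)
    (γ : W ⊗ RDelta R G ⟶ B) (hγ : γ ≫ g = 0)
    (sig : DeltaType G → (B.V →ₗ[R] A.V))
    (hcomm : ∀ (δ : DeltaType G) (k : G), k ∈ δ.1.1 → ∀ x, sig δ (B.ρ k x) = A.ρ k (sig δ x))
    (hinv : ∀ (δ : DeltaType G) (gg : G), sig (gg • δ) = sig δ)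
    (hlift : ∀ (δ : DeltaType G) (y : B.V), g.hom y = 0 → f.hom (sig δ y) = y) :
    ∃ l : W ⊗ RDelta R G ⟶ A, l ≫ f = γ := by
  classical
  -- the tensor-with-single map
  let tens : DeltaType G → (W.V →ₗ[R] (W ⊗ RDelta R G).V) := fun δ =>
    (TensorProduct.mk R W.V (MonoidAlgebra R (DeltaType G))).flip (MonoidAlgebra.single δ 1)
  let val : DeltaType G → (W.V →ₗ[R] A.V) := fun δ =>
    (A.ρ δ.2.out) ∘ₗ (sig δ) ∘ₗ (B.ρ δ.2.out⁻¹) ∘ₗ γ.hom ∘ₗ (tens δ)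
  let L : (W ⊗ RDelta R G).V →ₗ[R] A.V :=
    TensorProduct.lift ((Finsupp.linearCombination R val ∘ₗ
      (MonoidAlgebra.coeffLinearEquiv R).toLinearMap).flip)
  have Leval : ∀ (w : W.V) (δ : DeltaType G) (r : R),
      L (w ⊗ₜ[R] MonoidAlgebra.single δ r) = r • val δ w := by
    intro w δ r
    show (Finsupp.linearCombination R val) (Finsupp.single δ r) w = r • val δ w
    rw [Finsupp.linearCombination_single]
    rfl
  have rho_tmul : ∀ (gg : G) (w : W.V) (δ : DeltaType G) (r : R),
      (W ⊗ RDelta R G).ρ gg (w ⊗ₜ[R] MonoidAlgebra.single δ r)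
        = ((W.ρ gg w) ⊗ₜ[R] (MonoidAlgebra.single (gg • δ) r) : (W ⊗ RDelta R G).V) := by
    intro gg w δ r
    show (W.ρ gg w) ⊗ₜ[R] ((Representation.ofMulAction R G (DeltaType G)) gg (MonoidAlgebra.single δ r)) = _
    rw [Representation.ofMulAction_single]
    rfl
  have val_smul : ∀ (gg : G) (δ : DeltaType G) (w : W.V),
      val (gg • δ) (W.ρ gg w) = A.ρ gg (val δ w) := by
    rintro gg ⟨⟨H, hH⟩, q⟩ w
    have key : ((gg * q.out : G) : G ⧸ H) = ((gg • q).out : G ⧸ H) := by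
      rw [QuotientGroup.out_eq' (gg • q)]
      conv_rhs => rw [← QuotientGroup.out_eq' q]
      rfl
    have hmem : (gg * q.out)⁻¹ * (gg • q).out ∈ H := (QuotientGroup.eq).1 key
    have ho'' : (gg • q).out = gg * q.out * ((gg * q.out)⁻¹ * (gg • q).out) := by group
    have hb : γ.hom ((W.ρ gg w) ⊗ₜ[R] MonoidAlgebra.single (gg • (⟨⟨H, hH⟩, q⟩ : DeltaType G)) 1)
        = B.ρ gg (γ.hom (w ⊗ₜ[R] MonoidAlgebra.single (⟨⟨H, hH⟩, q⟩ : DeltaType G) 1)) := by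
      erw [← rho_tmul, hom_comm]
    show A.ρ ((gg • q).out) ((sig (gg • (⟨⟨H, hH⟩, q⟩ : DeltaType G)))
        ((B.ρ ((gg • q).out)⁻¹)
          (γ.hom ((W.ρ gg w) ⊗ₜ[R] MonoidAlgebra.single (gg • (⟨⟨H, hH⟩, q⟩ : DeltaType G)) 1))))
        = A.ρ gg (A.ρ (q.out) ((sig (⟨⟨H, hH⟩, q⟩ : DeltaType G))
            ((B.ρ (q.out)⁻¹) (γ.hom (w ⊗ₜ[R] MonoidAlgebra.single (⟨⟨H, hH⟩, q⟩ : DeltaType G) 1)))))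
    erw [hb, hinv, rho_rho,
      show ((gg • q).out)⁻¹ * gg = ((gg * q.out)⁻¹ * (gg • q).out)⁻¹ * (q.out)⁻¹ by
        conv_lhs => rw [ho'']
        group,
      ← rho_rho, hcomm _ _ (inv_mem hmem), rho_rho, rho_rho,
      show (gg • q).out * ((gg * q.out)⁻¹ * (gg • q).out)⁻¹ = gg * q.out by
        conv_lhs => rw [ho'']
        group,
      ← rho_rho]
  have val_f : ∀ (δ : DeltaType G) (w : W.V),
      f.hom (val δ w) = γ.hom (w ⊗ₜ[R] MonoidAlgebra.single δ 1) := by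
    intro δ w
    set o : G := δ.2.out with ho
    set b : B.V := γ.hom (w ⊗ₜ[R] MonoidAlgebra.single δ 1) with hbdef
    have hg : g.hom (B.ρ o⁻¹ b) = 0 := by
      erw [hom_comm g, hbdef, show g.hom (γ.hom (w ⊗ₜ[R] MonoidAlgebra.single δ 1))
        = (γ ≫ g).hom (w ⊗ₜ[R] MonoidAlgebra.single δ 1) from rfl, hγ,
        map_zero]
    show f.hom (A.ρ o (sig δ (B.ρ o⁻¹ b))) = b
    rw [hom_comm f, hlift δ _ hg, rho_rho, mul_inv_cancel, rho_one]
  have aux : ∀ (z : ((W ⊗ RDelta R G : Rep R G)).V) (gg : G),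
      L ((W ⊗ RDelta R G).ρ gg z) = A.ρ gg (L z) := by
    intro z
    induction z using TensorProduct.induction_on with
    | zero => intro gg; rw [map_zero, map_zero, map_zero]
    | tmul w x =>
      induction x using MonoidAlgebra.induction_linear with
      | zero => intro gg; erw [TensorProduct.tmul_zero, map_zero, map_zero]
      | add a c ha hc =>
        intro gg
        erw [TensorProduct.tmul_add]
        simp only [map_add, ha gg, hc gg]
      | single δ r =>
        intro gg
        rw [rho_tmul, Leval, Leval, val_smul, map_smul]
    | add a c ha hc =>
      intro gg
      simp only [map_add, ha gg, hc gg]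
  have auxf : ∀ (z : ((W ⊗ RDelta R G : Rep R G)).V), f.hom (L z) = γ.hom z := by
    intro z
    induction z using TensorProduct.induction_on with
    | zero => rw [map_zero, map_zero, map_zero]
    | tmul w x =>
      induction x using MonoidAlgebra.induction_linear with
      | zero => erw [TensorProduct.tmul_zero, map_zero, map_zero]
      | add a c ha hc =>
        erw [TensorProduct.tmul_add]
        simp only [map_add, ha, hc]
      | single δ r =>
        have hre : (w ⊗ₜ[R] MonoidAlgebra.single δ r : (W ⊗ RDelta R G).V) = r • (w ⊗ₜ[R] MonoidAlgebra.single δ (1:R) : (W ⊗ RDelta R G).V) := by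
          erw [← TensorProduct.tmul_smul, MonoidAlgebra.smul_single', mul_one]
        rw [Leval, map_smul, val_f, hre, map_smul]
    | add a c ha hc => simp only [map_add, ha, hc]
  refine ⟨ConcreteCategory.ofHom (C := Rep R G)
      (⟨L, fun gg => ?_⟩ : (W ⊗ RDelta R G).ρ.IntertwiningMap A.ρ), ?_⟩
  · ext z
    exact aux z gg
  · ext z
    exact auxf z

lemma sub_hom' {X Y : Rep R G} (f g : X ⟶ Y) : (f - g).hom = f.hom - g.hom := by
  rw [sub_eq_add_neg, sub_eq_add_neg]
  rfl

/-- Morphisms vanish when the composite of underlying maps is exact-adjacent. -/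
lemma comp_eq_zero_of_exact {X Y Z : Rep R G} (f : X ⟶ Y) (g : Y ⟶ Z)
    (h : Function.Exact f.hom g.hom) : f ≫ g = 0 := by
  ext x
  show g.hom (f.hom x) = (0 : X ⟶ Z).hom x
  rw [h.apply_apply_eq_zero]
  rfl

/-- Splitting data over every finite subgroup. -/
def SplitData {A B C : Rep R G} (f : A ⟶ B) (g : B ⟶ C) : Prop :=
  ∀ K : Subgroup G, Finite K →
    ∃ (σ : (resF R G K).obj B ⟶ (resF R G K).obj A)
      (τ : (resF R G K).obj C ⟶ (resF R G K).obj B),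
      σ ≫ (resF R G K).map f + (resF R G K).map g ≫ τ = 𝟙 ((resF R G K).obj B)

/-- 𝔉-projective objects lift through 𝔉-split maps. -/
theorem liftC {A B C Q : Rep R G} (hQ : FProjective R G Q) (f : A ⟶ B) (g : B ⟶ C)
    (hs : SplitData f g) (γ : Q ⟶ B) (hγ : γ ≫ g = 0) : ∃ l : Q ⟶ A, l ≫ f = γ := by
  classical
  obtain ⟨W, i, r, hir⟩ := hQ
  let sig : DeltaType G → (B.V →ₗ[R] A.V) := fun δ => ((hs δ.1.1 δ.1.2).choose).hom.toLinearMap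
  let tau : DeltaType G → (C.V →ₗ[R] B.V) := fun δ => ((hs δ.1.1 δ.1.2).choose_spec.choose).hom.toLinearMap
  have hcomm : ∀ (δ : DeltaType G) (k : G), k ∈ δ.1.1 → ∀ x,
      sig δ (B.ρ k x) = A.ρ k (sig δ x) := by
    intro δ k hk x
    exact Rep.hom_comm_apply ((hs δ.1.1 δ.1.2).choose) ⟨k, hk⟩ x
  have hinv : ∀ (δ : DeltaType G) (gg : G), sig (gg • δ) = sig δ := fun δ gg => rfl
  have hlift : ∀ (δ : DeltaType G) (y : B.V), g.hom y = 0 → f.hom (sig δ y) = y := by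
    intro δ y hy
    have h2 : f.hom (sig δ y) + tau δ (g.hom y) = y :=
      DFunLike.congr_fun (congrArg Rep.Hom.hom
        ((hs δ.1.1 δ.1.2).choose_spec.choose_spec)) y
    rw [hy, map_zero, add_zero] at h2
    exact h2
  obtain ⟨l', hl'⟩ := liftCore W f g (r ≫ γ)
    (by rw [Category.assoc, hγ, comp_zero]) sig hcomm hinv hlift
  refine ⟨i ≫ l', ?_⟩
  rw [Category.assoc, hl', ← Category.assoc, hir, Category.id_comp]

/-- Recursive construction of a chain map over `𝟙`. -/
theorem chainLiftRec (A B : ℕ → Rep R G) (dA : ∀ k, A (k+1) ⟶ A k) (dB : ∀ k, B (k+1) ⟶ B k)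
    (hAproj : ∀ k, FProjective R G (A (k+1)))
    (hAdd : ∀ k, dA (k+1) ≫ dA k = 0)
    (hsp0 : SplitData (dB 0) (0 : B 0 ⟶ B 0))
    (hsp : ∀ k, SplitData (dB (k+1)) (dB k))
    (f0 : A 0 ⟶ B 0) :
    ∃ u : ∀ k, A k ⟶ B k, u 0 = f0 ∧ ∀ k, u (k+1) ≫ dB k = dA k ≫ u k := by
  classical
  let F : ∀ k : ℕ, {p : (A k ⟶ B k) × (A (k+1) ⟶ B (k+1)) // p.2 ≫ dB k = dA k ≫ p.1} :=
    fun k => Nat.rec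
      (motive := fun k => {p : (A k ⟶ B k) × (A (k+1) ⟶ B (k+1)) // p.2 ≫ dB k = dA k ≫ p.1})
      ⟨(f0, (liftC (hAproj 0) (dB 0) (0 : B 0 ⟶ B 0) hsp0 (dA 0 ≫ f0) comp_zero).choose),
        (liftC (hAproj 0) (dB 0) (0 : B 0 ⟶ B 0) hsp0 (dA 0 ≫ f0) comp_zero).choose_spec⟩
      (fun k ih =>
        ⟨(ih.1.2, (liftC (hAproj (k+1)) (dB (k+1)) (dB k) (hsp k) (dA (k+1) ≫ ih.1.2)
            (by rw [Category.assoc, ih.2, ← Category.assoc, hAdd k, zero_comp])).choose),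
          (liftC (hAproj (k+1)) (dB (k+1)) (dB k) (hsp k) (dA (k+1) ≫ ih.1.2)
            (by rw [Category.assoc, ih.2, ← Category.assoc, hAdd k, zero_comp])).choose_spec⟩) k
  exact ⟨fun k => (F k).1.1, rfl, fun k => (F k).2⟩

/-- Recursive construction of a chain homotopy. -/
theorem homotopyRec (A : ℕ → Rep R G) (dA : ∀ k, A (k+1) ⟶ A k)
    (hAproj : ∀ k, FProjective R G (A (k+1)))
    (hAdd : ∀ k, dA (k+1) ≫ dA k = 0)
    (hsp : ∀ k, SplitData (dA (k+1)) (dA k))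
    (w : ∀ k, A k ⟶ A k) (hw : ∀ k, w (k+1) ≫ dA k = dA k ≫ w k) (hw0 : w 0 = 𝟙 (A 0)) :
    ∃ s : ∀ k, A k ⟶ A (k+1),
      ∀ k, w (k+1) - 𝟙 (A (k+1)) = s (k+1) ≫ dA (k+1) + dA k ≫ s k := by
  classical
  have hθ0 : (w 1 - 𝟙 (A 1)) ≫ dA 0 = 0 := by
    rw [Preadditive.sub_comp, hw 0, hw0, Category.comp_id, Category.id_comp, sub_self]
  let F : ∀ k : ℕ, {p : (A k ⟶ A (k+1)) × (A (k+1) ⟶ A (k+2)) //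
      w (k+1) - 𝟙 (A (k+1)) = p.2 ≫ dA (k+1) + dA k ≫ p.1} :=
    fun k => Nat.rec
      (motive := fun k => {p : (A k ⟶ A (k+1)) × (A (k+1) ⟶ A (k+2)) //
        w (k+1) - 𝟙 (A (k+1)) = p.2 ≫ dA (k+1) + dA k ≫ p.1})
      ⟨(0, (liftC (hAproj 0) (dA 1) (dA 0) (hsp 0) (w 1 - 𝟙 (A 1)) hθ0).choose),
        by rw [(liftC (hAproj 0) (dA 1) (dA 0) (hsp 0) (w 1 - 𝟙 (A 1)) hθ0).choose_spec,
          comp_zero, add_zero]⟩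
      (fun k ih => by
        have hrel : ih.1.2 ≫ dA (k+1) = w (k+1) - 𝟙 (A (k+1)) - dA k ≫ ih.1.1 := by
          exact eq_sub_of_add_eq ih.2.symm
        have hθ : (w (k+2) - 𝟙 (A (k+2)) - dA (k+1) ≫ ih.1.2) ≫ dA (k+1) = 0 := by
          rw [Preadditive.sub_comp, Preadditive.sub_comp, hw (k+1), Category.id_comp,
            Category.assoc, hrel, Preadditive.comp_sub, Preadditive.comp_sub,
            ← Category.assoc, hAdd k, zero_comp, sub_zero, Category.comp_id]
          abel
        exact ⟨(ih.1.2, (liftC (hAproj (k+1)) (dA (k+2)) (dA (k+1)) (hsp (k+1))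
            (w (k+2) - 𝟙 (A (k+2)) - dA (k+1) ≫ ih.1.2) hθ).choose),
          by
            rw [(liftC (hAproj (k+1)) (dA (k+2)) (dA (k+1)) (hsp (k+1))
              (w (k+2) - 𝟙 (A (k+2)) - dA (k+1) ≫ ih.1.2) hθ).choose_spec]
            abel⟩) k
  exact ⟨fun k => (F k).1.1, fun k => (F k).2⟩

/-- Recursive staircase lifting against a resolution of the target. -/
theorem stairRec (A B : ℕ → Rep R G) (dA : ∀ j, A (j+1) ⟶ A j) (dB : ∀ j, B (j+1) ⟶ B j)
    (hAproj : ∀ j, FProjective R G (A j))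
    (hAdd : ∀ j, dA (j+1) ≫ dA j = 0)
    (hsp0 : SplitData (dB 0) (0 : B 0 ⟶ B 0))
    (hsp : ∀ j, SplitData (dB (j+1)) (dB j))
    (γ0 : A 0 ⟶ B 0) (hγ0 : dA 0 ≫ γ0 = 0) :
    ∃ Φ : ∀ j, A j ⟶ B (j+1), Φ 0 ≫ dB 0 = γ0 ∧
      ∀ j, Φ (j+1) ≫ dB (j+1) = dA j ≫ Φ j := by
  classical
  have h00 : γ0 ≫ (0 : B 0 ⟶ B 0) = 0 := comp_zero
  have hb1 : (dA 0 ≫ (liftC (hAproj 0) (dB 0) (0 : B 0 ⟶ B 0) hsp0 γ0 h00).choose) ≫ dB 0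
      = 0 := by
    rw [Category.assoc,
      (liftC (hAproj 0) (dB 0) (0 : B 0 ⟶ B 0) hsp0 γ0 h00).choose_spec, hγ0]
  let F : ∀ j : ℕ, {p : (A j ⟶ B (j+1)) × (A (j+1) ⟶ B (j+2)) //
      p.2 ≫ dB (j+1) = dA j ≫ p.1} := fun j => Nat.rec
    (motive := fun j => {p : (A j ⟶ B (j+1)) × (A (j+1) ⟶ B (j+2)) //
      p.2 ≫ dB (j+1) = dA j ≫ p.1})
    ⟨((liftC (hAproj 0) (dB 0) (0 : B 0 ⟶ B 0) hsp0 γ0 h00).choose,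
      (liftC (hAproj 1) (dB 1) (dB 0) (hsp 0)
        (dA 0 ≫ (liftC (hAproj 0) (dB 0) (0 : B 0 ⟶ B 0) hsp0 γ0 h00).choose) hb1).choose),
      (liftC (hAproj 1) (dB 1) (dB 0) (hsp 0)
        (dA 0 ≫ (liftC (hAproj 0) (dB 0) (0 : B 0 ⟶ B 0) hsp0 γ0 h00).choose) hb1).choose_spec⟩
    (fun j ih =>
      ⟨(ih.1.2, (liftC (hAproj (j+2)) (dB (j+2)) (dB (j+1)) (hsp (j+1)) (dA (j+1) ≫ ih.1.2)
          (by rw [Category.assoc, ih.2, ← Category.assoc, hAdd j, zero_comp])).choose),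
        (liftC (hAproj (j+2)) (dB (j+2)) (dB (j+1)) (hsp (j+1)) (dA (j+1) ≫ ih.1.2)
          (by rw [Category.assoc, ih.2, ← Category.assoc, hAdd j, zero_comp])).choose_spec⟩) j
  exact ⟨fun j => (F j).1.1,
    (liftC (hAproj 0) (dB 0) (0 : B 0 ⟶ B 0) hsp0 γ0 h00).choose_spec,
    fun j => (F j).2⟩

/-- Constructing the splitting of the augmentation from a chain contraction. -/
theorem augSplit {K : Type} [Group K] {T0 N0 : Rep R K} (π : T0 ⟶ N0) (p : T0 ⟶ T0)
    (hπ : Function.Surjective π.hom)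
    (hpπ : p ≫ π = π)
    (hker : ∀ x : T0.V, π.hom x = 0 → p.hom x = 0) :
    ∃ t : N0 ⟶ T0, t ≫ π = 𝟙 N0 ∧ π ≫ t = p := by
  classical
  have hdep : ∀ x y : T0.V, π.hom x = π.hom y → p.hom x = p.hom y := by
    intro x y h
    have h0 : π.hom (x - y) = 0 := by rw [map_sub, h, sub_self]
    have h1 := hker _ h0
    rw [map_sub, sub_eq_zero] at h1
    exact h1
  have hsec : ∀ m, π.hom (Function.surjInv hπ m) = m := fun m => Function.surjInv_eq hπ m
  let tfun : N0.V → T0.V := fun m => p.hom (Function.surjInv hπ m)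
  have htfun : ∀ x : T0.V, tfun (π.hom x) = p.hom x := fun x => hdep _ _ (hsec _)
  have hadd : ∀ a b, tfun (a + b) = tfun a + tfun b := by
    intro a b
    have : tfun (a + b) = p.hom (Function.surjInv hπ a + Function.surjInv hπ b) :=
      hdep _ _ (by rw [hsec, map_add, hsec, hsec])
    rw [this, map_add]
  have hsmul : ∀ (c : R) (a), tfun (c • a) = c • tfun a := by
    intro c a
    have : tfun (c • a) = p.hom (c • Function.surjInv hπ a) :=
      hdep _ _ (by rw [hsec, map_smul, hsec])
    rw [this, map_smul]
  let tlin : N0.V →ₗ[R] T0.V :=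
    { toFun := tfun, map_add' := hadd, map_smul' := hsmul }
  have hequiv : ∀ (k : K) (m : N0.V), tlin (N0.ρ k m) = T0.ρ k (tlin m) := by
    intro k m
    have h1 : N0.ρ k m = π.hom (T0.ρ k (Function.surjInv hπ m)) := by
      rw [hom_comm π, hsec]
    show tfun (N0.ρ k m) = T0.ρ k (tfun m)
    rw [h1, htfun, hom_comm p]
  refine ⟨ConcreteCategory.ofHom (C := Rep R K)
    (⟨tlin, fun k => by ext m; exact hequiv k m⟩ : N0.ρ.IntertwiningMap T0.ρ), ?_, ?_⟩
  · ext m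
    show π.hom (p.hom (Function.surjInv hπ m)) = m
    have := DFunLike.congr_fun (congrArg Rep.Hom.hom hpπ) (Function.surjInv hπ m)
    exact this.trans (hsec m)
  · ext x
    exact htfun x

/-- If `N` has finite `𝔉`-projective dimension and `M` is
`𝔉_G`-projective, then `𝔉Ext^i_{RG}(M, N) = 0` for all `i ≥ 1` (computed from
any `𝔉`-split `𝔉`-projective resolution of `M`). -/
theorem fExt_vanishes_of_fgProjective (R : Type) [CommRing R] (G : Type) [Group G]
    (M N : Rep R G)
    (hN : ∃ (n : ℕ) (res : Res R G N), res.FSplit ∧ res.FProj ∧ res.LengthLe n)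
    (hM : FGProjective R G M) :
    ∀ P : Res R G M, P.FSplit → P.FProj →
      ∀ (n : ℕ) (φ : P.P (n+1) ⟶ N), P.d (n+1) ≫ φ = 0 →
        ∃ ψ : P.P n ⟶ N, φ = P.d n ≫ ψ := by
  classical
  obtain ⟨m, resN, hNsplit, hNproj, hNlen⟩ := hN
  obtain ⟨T, dT, π, hTproj, hTexact, hTsplit, hπsurj, hTexact0, hTlift⟩ := hM
  intro P hPsplit hPproj n φ hφ
  let ι : ℕ → ℤ := fun k => Nat.rec (motive := fun _ => ℤ) (0 : ℤ) (fun _ ih => ih + 1) k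
  let P' : ℕ → Rep R G := fun k => Nat.rec (motive := fun _ => Rep R G) M (fun k _ => P.P k) k
  let dP' : ∀ k, P' (k+1) ⟶ P' k := fun k =>
    Nat.rec (motive := fun k => P' (k+1) ⟶ P' k) P.ε (fun k _ => P.d k) k
  let T' : ℕ → Rep R G := fun k => Nat.rec (motive := fun _ => Rep R G) M (fun k _ => T (ι k)) k
  let dT' : ∀ k, T' (k+1) ⟶ T' k := fun k =>
    Nat.rec (motive := fun k => T' (k+1) ⟶ T' k) π (fun k _ => dT (ι k)) k
  let B' : ℕ → Rep R G := fun j => Nat.rec (motive := fun _ => Rep R G) N (fun j _ => resN.P j) j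
  let dB' : ∀ j, B' (j+1) ⟶ B' j := fun j =>
    Nat.rec (motive := fun j => B' (j+1) ⟶ B' j) resN.ε (fun j _ => resN.d j) j
  have hPdd : ∀ k, dP' (k+1) ≫ dP' k = 0 := by
    intro k
    cases k with
    | zero => exact comp_eq_zero_of_exact _ _ P.exact0
    | succ k => exact comp_eq_zero_of_exact _ _ (P.exact k)
  have hTdd0 : ∀ z : ℤ, dT (z+1) ≫ dT z = 0 :=
    fun z => comp_eq_zero_of_exact _ _ (hTexact z)
  have hTdd : ∀ k, dT' (k+1) ≫ dT' k = 0 := by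
    intro k
    cases k with
    | zero => exact comp_eq_zero_of_exact _ _ hTexact0
    | succ k => exact hTdd0 (ι k)
  have hBdd : ∀ j, dB' (j+1) ≫ dB' j = 0 := by
    intro j
    cases j with
    | zero => exact comp_eq_zero_of_exact _ _ resN.exact0
    | succ j => exact comp_eq_zero_of_exact _ _ (resN.exact j)
  have hspP0 : SplitData (dP' 0) (0 : M ⟶ M) := by
    intro K hK
    obtain ⟨t, s, h1, h2, h3⟩ := hPsplit K hK
    exact ⟨t, 0, by rw [comp_zero, add_zero]; exact h1⟩
  have hspP : ∀ k, SplitData (dP' (k+1)) (dP' k) := by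
    intro k K hK
    obtain ⟨t, s, h1, h2, h3⟩ := hPsplit K hK
    cases k with
    | zero => exact ⟨s 0, t, (add_comm _ _).trans h2⟩
    | succ k => exact ⟨s (k+1), s k, (add_comm _ _).trans (h3 k)⟩
  have hspB0 : SplitData (dB' 0) (0 : N ⟶ N) := by
    intro K hK
    obtain ⟨t, s, h1, h2, h3⟩ := hNsplit K hK
    exact ⟨t, 0, by rw [comp_zero, add_zero]; exact h1⟩
  have hspB : ∀ j, SplitData (dB' (j+1)) (dB' j) := by
    intro j K hK
    obtain ⟨t, s, h1, h2, h3⟩ := hNsplit K hK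
    cases j with
    | zero => exact ⟨s 0, t, (add_comm _ _).trans h2⟩
    | succ j => exact ⟨s (j+1), s j, (add_comm _ _).trans (h3 j)⟩
  -- augmentation splitting for T
  have hTaug : ∀ (K : Subgroup G), Finite K →
      ∃ (t : (resF R G K).obj M ⟶ (resF R G K).obj (T 0))
        (s : ∀ z : ℤ, (resF R G K).obj (T z) ⟶ (resF R G K).obj (T (z+1))),
        (t ≫ (resF R G K).map π = 𝟙 _) ∧
        ((resF R G K).map π ≫ t + s 0 ≫ (resF R G K).map (dT 0) = 𝟙 _) ∧
        (∀ z : ℤ, (resF R G K).map (dT z) ≫ s z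
          + s (z+1) ≫ (resF R G K).map (dT (z+1)) = 𝟙 _) := by
    intro K hK
    obtain ⟨s, hs⟩ := hTsplit K hK
    let p : (resF R G K).obj (T 0) ⟶ (resF R G K).obj (T 0) :=
      𝟙 ((resF R G K).obj (T 0)) - s 0 ≫ (resF R G K).map (dT 0)
    have hpdef : p = 𝟙 ((resF R G K).obj (T 0)) - s 0 ≫ (resF R G K).map (dT 0) := rfl
    have hd0π : dT 0 ≫ π = 0 := comp_eq_zero_of_exact _ _ hTexact0
    have hmap0 : (resF R G K).map (dT 0) ≫ (resF R G K).map π = 0 := by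
      rw [← Functor.map_comp, hd0π]
      ext x
      rfl
    have hpπ : p ≫ (resF R G K).map π = (resF R G K).map π := by
      rw [hpdef]
      simp only [Preadditive.sub_comp, Category.id_comp, Category.assoc]
      rw [hmap0, comp_zero, sub_zero]
    have hker : ∀ x, ((resF R G K).map π).hom x = 0 → p.hom x = 0 := by
      intro x hx
      obtain ⟨y, hy⟩ := (hTexact0 x).mp hx
      let s0 : (T 0).V →ₗ[R] (T (0+1)).V := (s 0).hom.toLinearMap
      let s1 : (T (0+1)).V →ₗ[R] (T (0+1+1)).V := (s (0+1)).hom.toLinearMap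
      have h10 : s0 ((dT 0).hom y) + (dT (0+1)).hom (s1 y) = y :=
        DFunLike.congr_fun (congrArg Rep.Hom.hom (hs 0)) y
      have h11 : (dT 0).hom ((dT (0+1)).hom (s1 y)) = 0 := by
        have h12 := DFunLike.congr_fun (congrArg Rep.Hom.hom (hTdd0 0)) (s1 y)
        exact h12.trans rfl
      let x' : (T 0).V := x
      have hy' : (dT 0).hom y = x' := hy
      have hxp : p.hom x = x' - (dT 0).hom (s0 x') := by
        show (𝟙 ((resF R G K).obj (T 0)) - s 0 ≫ (resF R G K).map (dT 0)).hom x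
            = x' - (dT 0).hom (s0 x')
        rw [sub_hom']
        rfl
      rw [hxp, ← hy', show s0 ((dT 0).hom y) = y - (dT (0+1)).hom (s1 y) from
        eq_sub_of_add_eq h10, map_sub, h11, sub_zero, sub_self]
      rfl
    obtain ⟨t, ht1, ht2⟩ := augSplit ((resF R G K).map π) p hπsurj hpπ hker
    refine ⟨t, s, ht1, ?_, hs⟩
    rw [ht2, hpdef]
    abel
  have hspT0 : SplitData (dT' 0) (0 : M ⟶ M) := by
    intro K hK
    obtain ⟨t, s, h1, h2, h3⟩ := hTaug K hK
    exact ⟨t, 0, by rw [comp_zero, add_zero]; exact h1⟩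
  have hspT : ∀ k, SplitData (dT' (k+1)) (dT' k) := by
    intro k K hK
    obtain ⟨t, s, h1, h2, h3⟩ := hTaug K hK
    cases k with
    | zero => exact ⟨s 0, t, (add_comm _ _).trans h2⟩
    | succ k => exact ⟨s (ι k + 1), s (ι k), (add_comm _ _).trans (h3 (ι k))⟩
  -- chain maps and homotopy
  obtain ⟨u, hu0, husq⟩ := chainLiftRec T' P' dT' dP' (fun k => hTproj (ι k)) hTdd
    hspP0 hspP (𝟙 M)
  obtain ⟨v, hv0, hvsq⟩ := chainLiftRec P' T' dP' dT' (fun k => hPproj k) hPdd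
    hspT0 hspT (𝟙 M)
  obtain ⟨s, hsrel⟩ := homotopyRec P' dP' (fun k => hPproj k) hPdd hspP
    (fun k => v k ≫ u k)
    (fun k => by
      show (v (k+1) ≫ u (k+1)) ≫ dP' k = dP' k ≫ (v k ≫ u k)
      rw [Category.assoc, husq k, ← Category.assoc, hvsq k, Category.assoc])
    (by show v 0 ≫ u 0 = 𝟙 M; rw [hv0, hu0]; exact Category.id_comp _)
  -- the transported cocycle
  have h0 : dP' (n+1+1) ≫ φ = 0 := hφ
  have hφT : dT (ι n + 1) ≫ (u (n+1+1) ≫ φ) = 0 := by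
    show dT' (n+1+1) ≫ (u (n+1+1) ≫ φ) = 0
    rw [← Category.assoc, ← husq (n+1+1), Category.assoc, h0, comp_zero]
  -- staircase
  let e : ℕ → ℤ := fun j => Nat.rec (motive := fun _ => ℤ) (ι n) (fun _ ih => ih + 1) j
  obtain ⟨Φ, hΦ0, hΦsq⟩ := stairRec (fun j => T (e j + 1)) B' (fun j => dT (e j + 1)) dB'
    (fun j => hTproj (e j + 1)) (fun j => hTdd0 (e j + 1)) hspB0 hspB
    (u (n+1+1) ≫ φ) hφT
  -- descent
  let St : ℕ → Prop := fun j => ∃ (ψ : T (e j) ⟶ B' (j+1)) (ψn : T (e j + 1) ⟶ B' (j+2)),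
    Φ j = dT (e j) ≫ ψ + ψn ≫ dB' (j+1)
  have hstep : ∀ j, St (j+1) → St j := by
    rintro j ⟨ψ', ψnn, hSt⟩
    have h1 : dT (e j + 1) ≫ ψ' = Φ (j+1) - ψnn ≫ dB' (j+2) := eq_sub_of_add_eq hSt.symm
    have hθ : dT (e j + 1) ≫ (Φ j - ψ' ≫ dB' (j+1)) = 0 := by
      rw [Preadditive.comp_sub, ← hΦsq j, ← Category.assoc, h1, Preadditive.sub_comp,
        Category.assoc, hBdd (j+1), comp_zero, sub_zero, sub_self]
    obtain ⟨ψ, hψ⟩ := hTlift (B' (j+1)) (hNproj j) (e j) (Φ j - ψ' ≫ dB' (j+1)) hθ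
    exact ⟨ψ, ψ', by rw [← hψ]; abel⟩
  have hbase : St (m+1) := by
    have hz : IsZero (B' (m+1+1)) := hNlen (m+1) (Nat.lt_succ_self m)
    exact ⟨0, 0, hz.eq_of_tgt _ _⟩
  have hSt0 : St 0 := by
    have key : ∀ i j, j + i = m + 1 → St j := by
      intro i
      induction i with
      | zero =>
        intro j hj
        have hjj : j = m + 1 := by omega
        rw [hjj]
        exact hbase
      | succ i ih =>
        intro j hj
        exact hstep j (ih (j+1) (by omega))
    exact key (m+1) 0 (by omega)
  obtain ⟨ψ, ψn, hdec⟩ := hSt0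
  have hφT2 : Φ 0 ≫ dB' 0 = dT (e 0) ≫ (ψ ≫ dB' 0) := by
    rw [hdec, Preadditive.add_comp, Category.assoc, Category.assoc, hBdd 0,
      comp_zero, add_zero]
  have hφT3 : u (n+1+1) ≫ φ = dT' (n+1) ≫ (ψ ≫ dB' 0) := hΦ0.symm.trans hφT2
  have hB : v (n+1+1) ≫ (u (n+1+1) ≫ φ) = dP' (n+1) ≫ (v (n+1) ≫ (ψ ≫ dB' 0)) := by
    rw [hφT3, ← Category.assoc, hvsq (n+1), Category.assoc]
  have hA : (v (n+1+1) ≫ u (n+1+1)) ≫ φ - φ = dP' (n+1) ≫ (s (n+1) ≫ φ) := by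
    have h3 := congrArg (fun x => x ≫ φ) (hsrel (n+1))
    rw [Preadditive.sub_comp, Category.id_comp, Preadditive.add_comp,
      Category.assoc (s (n+1+1)) (dP' (n+1+1)) φ, h0, comp_zero, zero_add,
      Category.assoc (dP' (n+1)) (s (n+1)) φ] at h3
    exact h3
  refine ⟨v (n+1) ≫ (ψ ≫ dB' 0) - s (n+1) ≫ φ, ?_⟩
  show φ = dP' (n+1) ≫ (v (n+1) ≫ (ψ ≫ dB' 0) - s (n+1) ≫ φ)
  rw [Preadditive.comp_sub, ← hB, ← hA, Category.assoc]
  abel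


end FPaper
end
end
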